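/- In type B: for a basic triple (k,p,q) with q > 0, the basic signed permutation w(k,p,q) satisfies w(k,p,q)⁻¹ = w(k,q,p); for q < 0, it satisfies w(k,p,q)⁻¹ = w(p+q+k-1, 1-q, 1-p). -/

import Mathlib

/-- A permutation of `ℤ` is a signed permutation if it is odd: `w(-i) = -w(i)`. -/
def IsSigned (w : Equiv.Perm ℤ) : Prop := ∀ i : ℤ, w (-i) = -(w i)

/-- `w` fixes every integer `m` with `|m| > N` (i.e. `w` lies in `W_N`, resp. `S` supported there). -/
def FixesBeyond (N : ℤ) (w : Equiv.Perm ℤ) : Prop := ∀ m : ℤ, N < |m| → w m = m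

/-- Word length of `g` with respect to a generating set `S`. -/
noncomputable def wlen (S : Set (Equiv.Perm ℤ)) (g : Equiv.Perm ℤ) : ℕ :=
  sInf {m | ∃ l : List (Equiv.Perm ℤ), l.length = m ∧ (∀ x ∈ l, x ∈ S) ∧ l.prod = g}

/-- Bruhat order for the group generated by `S`: the reflexive-transitive closure of
multiplying on the right by a reflection (a conjugate, by an element of the generated
subgroup, of a generator) while increasing the word length. -/
def bruhatLe (S : Set (Equiv.Perm ℤ)) (u v : Equiv.Perm ℤ) : Prop :=
  Relation.ReflTransGen
    (fun x y => (∃ g ∈ Subgroup.closure S, ∃ s ∈ S, y = x * (g * s * g⁻¹)) ∧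
      wlen S x < wlen S y) u v

/-- The simple generators of the type B Weyl group `W_n`, as permutations of `ℤ`. -/
def BGens (n : ℤ) : Set (Equiv.Perm ℤ) :=
  {Equiv.swap 1 (-1)} ∪
    {x | ∃ i : ℤ, 1 ≤ i ∧ i < n ∧ x = Equiv.swap i (i + 1) * Equiv.swap (-i) (-(i + 1))}

/-- The simple generators of the infinite signed permutation group `W_∞`. -/
def BGensInf : Set (Equiv.Perm ℤ) :=
  {Equiv.swap 1 (-1)} ∪
    {x | ∃ i : ℤ, 1 ≤ i ∧ x = Equiv.swap i (i + 1) * Equiv.swap (-i) (-(i + 1))}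

/-- Adjacent transpositions `(i, i+1)` for `a ≤ i < b`: simple generators of the symmetric
group on `{a, ..., b}`. -/
def AGens (a b : ℤ) : Set (Equiv.Perm ℤ) :=
  {x | ∃ i : ℤ, a ≤ i ∧ i < b ∧ x = Equiv.swap i (i + 1)}

/-- The length of a signed permutation in `W_n`, by the inversion-count formula. -/
noncomputable def lenCount (n : ℤ) (w : Equiv.Perm ℤ) : ℕ :=
  {x : ℤ × ℤ | 0 < x.1 ∧ x.1 < x.2 ∧ x.2 ≤ n ∧ w x.2 < w x.1}.ncard +
  {x : ℤ × ℤ | 0 < x.1 ∧ x.1 ≤ x.2 ∧ x.2 ≤ n ∧ w x.1 + w x.2 < 0}.ncard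

/-- The length of a signed permutation in `W_∞`, by the inversion-count formula. -/
noncomputable def lenCountInf (w : Equiv.Perm ℤ) : ℕ :=
  {x : ℤ × ℤ | 0 < x.1 ∧ x.1 < x.2 ∧ w x.2 < w x.1}.ncard +
  {x : ℤ × ℤ | 0 < x.1 ∧ x.1 ≤ x.2 ∧ w x.1 + w x.2 < 0}.ncard

/-- Type B rank function `r_w(p,q) = #{i ≥ p : w(i) ≤ -q}`. -/
noncomputable def rB (p q : ℤ) (w : Equiv.Perm ℤ) : ℤ :=
  ({i : ℤ | p ≤ i ∧ w i ≤ -q}.ncard : ℤ)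

/-- Type B rank function with the bound `i ≤ n`: `r_w(p,q) = #{p ≤ i ≤ n : w(i) ≤ -q}`. -/
noncomputable def rBn (n p q : ℤ) (w : Equiv.Perm ℤ) : ℤ :=
  ({i : ℤ | p ≤ i ∧ i ≤ n ∧ w i ≤ -q}.ncard : ℤ)

/-- Type A rank function `r_v(p,q) = #{1 ≤ i ≤ p : v(i) > q}`. -/
noncomputable def rA (p q : ℤ) (v : Equiv.Perm ℤ) : ℤ :=
  ({i : ℤ | 1 ≤ i ∧ i ≤ p ∧ q < v i}.ncard : ℤ)

/-- Rank function `r_v(p,q) = #{i ≤ -p : v(i) ≥ q}` (for permutations of `{-n,...,n}`). -/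
noncomputable def rAneg (p q : ℤ) (v : Equiv.Perm ℤ) : ℤ :=
  ({i : ℤ | i ≤ -p ∧ q ≤ v i}.ncard : ℤ)

/-- A type B basic triple. -/
def BasicB (k p q : ℤ) : Prop :=
  0 < k ∧ 1 - p - q < k ∧ 0 < p ∧ q ≠ 0 ∧ (p = 1 → 0 < q)

/-- The basic (bigrassmannian) permutation `v(k,p,q)` of type A, with one-line notation
`1, ..., p-k, q+1, ..., q+k, p-k+1, ..., q`, as a function on `ℤ`. -/
def vAfun (k p q i : ℤ) : ℤ :=
  if i ≤ p - k then i else if i ≤ p then q + (i - (p - k))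
  else if i ≤ q + k then i - k else i

/-- `w0` is the minimum, in Bruhat order on `W_∞`, among signed permutations `w`
with `r_w(p,q) ≥ k`: i.e. the basic signed permutation `w(k,p,q)`. -/
def IsMinB (k p q : ℤ) (w0 : Equiv.Perm ℤ) : Prop :=
  IsSigned w0 ∧ (∃ N : ℤ, FixesBeyond N w0) ∧ k ≤ rB p q w0 ∧
    ∀ w : Equiv.Perm ℤ, IsSigned w → (∃ N : ℤ, FixesBeyond N w) → k ≤ rB p q w →
      bruhatLe BGensInf w0 w

lemma perm_apply_inv_self (f : Equiv.Perm ℤ) (x : ℤ) : f (f⁻¹ x) = x := f.apply_symm_apply x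

lemma perm_inv_apply_self (f : Equiv.Perm ℤ) (x : ℤ) : f⁻¹ (f x) = x := f.symm_apply_apply x

lemma signed_inv {w : Equiv.Perm ℤ} (h : IsSigned w) : IsSigned w⁻¹ := by
  intro i
  apply w.injective
  rw [perm_apply_inv_self, h, perm_apply_inv_self]

lemma fixes_inv {w : Equiv.Perm ℤ} {N : ℤ} (h : FixesBeyond N w) : FixesBeyond N w⁻¹ := by
  intro m hm
  conv_lhs => rw [← h m hm]
  exact perm_inv_apply_self w m

lemma fixes_mono {w : Equiv.Perm ℤ} {N N' : ℤ} (h : FixesBeyond N w) (hle : N ≤ N') :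
    FixesBeyond N' w := fun m hm => h m (lt_of_le_of_lt hle hm)

lemma apply_bound {w : Equiv.Perm ℤ} {N : ℤ} (hN : FixesBeyond N w) {m : ℤ} (hm : |m| ≤ N) :
    |w m| ≤ N := by
  by_contra h
  push_neg at h
  have h2 : w (w m) = w m := hN (w m) h
  have h3 : w m = m := w.injective h2
  rw [h3] at h
  omega

lemma swap_inv_self (a b : ℤ) : (Equiv.swap a b)⁻¹ = Equiv.swap a b := Equiv.swap_inv a b

lemma BGensInf_inv {s : Equiv.Perm ℤ} (hs : s ∈ BGensInf) : s⁻¹ = s := by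
  rcases hs with h | ⟨i, hi, rfl⟩
  · simp only [Set.mem_singleton_iff] at h
    rw [h, Equiv.swap_inv]
  · have hcomm : Equiv.swap i (i+1) * Equiv.swap (-i) (-(i+1))
        = Equiv.swap (-i) (-(i+1)) * Equiv.swap i (i+1) := by
      ext x
      simp only [Equiv.Perm.mul_apply, Equiv.swap_apply_def]
      split_ifs <;> omega
    rw [mul_inv_rev, Equiv.swap_inv, Equiv.swap_inv, hcomm]

lemma wlen_inv (g : Equiv.Perm ℤ) : wlen BGensInf g⁻¹ = wlen BGensInf g := by
  have key : ∀ h : Equiv.Perm ℤ,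
      {m | ∃ l : List (Equiv.Perm ℤ), l.length = m ∧ (∀ x ∈ l, x ∈ BGensInf) ∧ l.prod = h} ⊆
      {m | ∃ l : List (Equiv.Perm ℤ), l.length = m ∧ (∀ x ∈ l, x ∈ BGensInf) ∧ l.prod = h⁻¹} := by
    rintro h m ⟨l, hlen, hmem, hprod⟩
    refine ⟨(l.map Inv.inv).reverse, by simp [hlen], ?_, ?_⟩
    · intro x hx
      simp only [List.mem_reverse, List.mem_map] at hx
      obtain ⟨y, hy, rfl⟩ := hx
      rw [BGensInf_inv (hmem y hy)]
      exact hmem y hy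
    · rw [List.prod_reverse_noncomm]
      simp only [List.map_map]
      have : (l.map (fun x => (Inv.inv x)⁻¹)) = l := by
        simp
      rw [show ((Inv.inv : Equiv.Perm ℤ → _) ∘ (Inv.inv)) = id from funext (fun x => inv_inv x)]
      simp [hprod]
  have hset : {m | ∃ l : List (Equiv.Perm ℤ), l.length = m ∧ (∀ x ∈ l, x ∈ BGensInf) ∧ l.prod = g⁻¹}
      = {m | ∃ l : List (Equiv.Perm ℤ), l.length = m ∧ (∀ x ∈ l, x ∈ BGensInf) ∧ l.prod = g} := by
    apply Set.Subset.antisymm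
    · have := key g⁻¹
      simpa using this
    · exact key g
  unfold wlen
  rw [hset]

lemma bruhat_wlen_le {u v : Equiv.Perm ℤ} (h : bruhatLe BGensInf u v) :
    wlen BGensInf u ≤ wlen BGensInf v := by
  induction h with
  | refl => exact le_refl _
  | tail _ hstep ih => exact le_trans ih (le_of_lt hstep.2)

lemma bruhat_antisymm {u v : Equiv.Perm ℤ} (h1 : bruhatLe BGensInf u v)
    (h2 : wlen BGensInf v ≤ wlen BGensInf u) : u = v := by
  rcases (Relation.ReflTransGen.cases_tail h1) with rfl | ⟨b, hub, hbv⟩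
  · rfl
  · exact absurd (lt_of_le_of_lt (le_trans h2 (bruhat_wlen_le hub)) hbv.2) (lt_irrefl _)

lemma rB_inv {w : Equiv.Perm ℤ} (hw : IsSigned w) (p q : ℤ) : rB q p w⁻¹ = rB p q w := by
  unfold rB
  congr 1
  have himg : (fun i => -(w i)) '' {i : ℤ | p ≤ i ∧ w i ≤ -q} = {i : ℤ | q ≤ i ∧ w⁻¹ i ≤ -p} := by
    ext j
    constructor
    · rintro ⟨i, ⟨hpi, hwq⟩, rfl⟩
      dsimp only
      refine ⟨by omega, ?_⟩
      have : w⁻¹ (-(w i)) = -i := by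
        apply w.injective
        rw [perm_apply_inv_self, hw]
      rw [this]; omega
    · rintro ⟨hqj, hj⟩
      refine ⟨-(w⁻¹ j), ⟨by omega, ?_⟩, ?_⟩
      · rw [hw, perm_apply_inv_self]; omega
      · dsimp only; rw [hw, perm_apply_inv_self]; omega
  rw [← himg, Set.ncard_image_of_injective _ (fun a b hab => w.injective (neg_injective hab))]

lemma rB_shift {w : Equiv.Perm ℤ} {N : ℤ} (hN : FixesBeyond N w)
    (p q : ℤ) (hp : |p| ≤ N) (hq : |q| + 1 ≤ N) :
    rB (1-q) (1-p) w = p + q - 1 + rB p q w⁻¹ := by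
  obtain ⟨hp1, hp2⟩ := abs_le.mp hp
  have hq' : |q| ≤ N - 1 := by omega
  obtain ⟨hq1, hq2⟩ := abs_le.mp hq'
  have hN0 : 0 ≤ N := le_trans (abs_nonneg p) hp
  have hNinv : FixesBeyond N w⁻¹ := fixes_inv hN
  classical
  set F : Finset ℤ := (Finset.Icc (1-q) N).filter (fun i => w i ≤ p - 1) with hF
  set F' : Finset ℤ := (Finset.Icc (1-q) N).filter (fun i => ¬ w i ≤ p - 1) with hF'
  set G2 : Finset ℤ := (Finset.Icc p N).filter (fun j => 1 - q ≤ w⁻¹ j) with hG2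
  set G : Finset ℤ := (Finset.Icc p N).filter (fun j => ¬ 1 - q ≤ w⁻¹ j) with hG
  -- first set identification
  have hA : {i : ℤ | 1 - q ≤ i ∧ w i ≤ -(1-p)} = ↑F := by
    ext i
    simp only [Set.mem_setOf_eq, hF, Finset.coe_filter, Finset.mem_Icc]
    constructor
    · rintro ⟨h1, h2⟩
      refine ⟨⟨h1, ?_⟩, by omega⟩
      by_contra hgt
      push_neg at hgt
      have habs : N < |i| := by rw [abs_of_nonneg (by omega)]; omega
      have : w i = i := hN i habs
      omega
    · rintro ⟨⟨h1, _⟩, h2⟩; exact ⟨h1, by omega⟩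
  have hAcard : rB (1-q) (1-p) w = (F.card : ℤ) := by
    unfold rB
    rw [hA, Set.ncard_coe_finset]
  -- second set identification
  have hB : {i : ℤ | p ≤ i ∧ w⁻¹ i ≤ -q} = ↑G := by
    ext j
    simp only [Set.mem_setOf_eq, hG, Finset.coe_filter, Finset.mem_Icc]
    constructor
    · rintro ⟨h1, h2⟩
      refine ⟨⟨h1, ?_⟩, by omega⟩
      by_contra hgt
      push_neg at hgt
      have habs : N < |j| := by rw [abs_of_nonneg (by omega)]; omega
      have : w⁻¹ j = j := hNinv j habs
      omega
    · rintro ⟨⟨h1, _⟩, h2⟩; exact ⟨h1, by omega⟩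
  have hBcard : rB p q w⁻¹ = (G.card : ℤ) := by
    unfold rB
    rw [hB, Set.ncard_coe_finset]
  -- partitions
  have hpart1 : F.card + F'.card = (Finset.Icc (1-q) N).card :=
    Finset.card_filter_add_card_filter_not _
  have hpart2 : G2.card + G.card = (Finset.Icc p N).card :=
    Finset.card_filter_add_card_filter_not _
  -- bijection F' ≃ G2 via w
  have hbij : F'.card = G2.card := by
    apply Finset.card_bij (fun i _ => w i)
    · intro a ha
      simp only [hF', Finset.mem_filter, Finset.mem_Icc] at ha
      obtain ⟨⟨h1, h2⟩, h3⟩ := ha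
      have hb : |w a| ≤ N := apply_bound hN (by rw [abs_le]; omega)
      simp only [hG2, Finset.mem_filter, Finset.mem_Icc, perm_inv_apply_self]
      rw [abs_le] at hb
      exact ⟨⟨by omega, by omega⟩, h1⟩
    · intro a _ b _ hab
      exact w.injective hab
    · intro j hj
      simp only [hG2, Finset.mem_filter, Finset.mem_Icc] at hj
      obtain ⟨⟨h1, h2⟩, h3⟩ := hj
      refine ⟨w⁻¹ j, ?_, perm_apply_inv_self _ _⟩
      have hb : |w⁻¹ j| ≤ N := apply_bound hNinv (by rw [abs_le]; omega)
      simp only [hF', Finset.mem_filter, Finset.mem_Icc, perm_apply_inv_self]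
      rw [abs_le] at hb
      exact ⟨⟨h3, by omega⟩, by omega⟩
  -- Icc cardinalities
  have hc1 : ((Finset.Icc (1-q) N).card : ℤ) = N + q := by
    rw [Int.card_Icc]
    omega
  have hc2 : ((Finset.Icc p N).card : ℤ) = N - p + 1 := by
    rw [Int.card_Icc]
    omega
  omega

theorem stmt16 (k p q : ℤ) (hb : BasicB k p q) (w0 w1 : Equiv.Perm ℤ)
    (h0 : IsMinB k p q w0) :
    (0 < q → IsMinB k q p w1 → w0⁻¹ = w1) ∧
    (q < 0 → IsMinB (p + q + k - 1) (1 - q) (1 - p) w1 → w0⁻¹ = w1) := by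
  obtain ⟨hs0, ⟨N0, hf0⟩, hr0, hmin0⟩ := h0
  constructor
  · rintro hq ⟨hs1, ⟨N1, hf1⟩, hr1, hmin1⟩
    have b1 : bruhatLe BGensInf w0 w1⁻¹ := by
      apply hmin0 _ (signed_inv hs1) ⟨N1, fixes_inv hf1⟩
      rwa [rB_inv hs1 q p]
    have b2 : bruhatLe BGensInf w1 w0⁻¹ := by
      apply hmin1 _ (signed_inv hs0) ⟨N0, fixes_inv hf0⟩
      rwa [rB_inv hs0]
    have hw : wlen BGensInf w1⁻¹ ≤ wlen BGensInf w0 := by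
      have := bruhat_wlen_le b2
      rw [wlen_inv w0] at this
      rw [wlen_inv w1]
      exact this
    have := bruhat_antisymm b1 hw
    rw [this, inv_inv]
  · rintro hq ⟨hs1, ⟨N1, hf1⟩, hr1, hmin1⟩
    -- choose big N's
    set M0 : ℤ := max N0 (|p| + |q| + 1) with hM0
    set M1 : ℤ := max N1 (|p| + |q| + 1) with hM1
    have hf0' : FixesBeyond M0 w0 := fixes_mono hf0 (le_max_left _ _)
    have hf1' : FixesBeyond M1 w1 := fixes_mono hf1 (le_max_left _ _)
    have hpM0 : |p| ≤ M0 := le_trans (by linarith [abs_nonneg q]) (le_max_right _ _)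
    have hqM0 : |q| + 1 ≤ M0 := le_trans (by linarith [abs_nonneg p]) (le_max_right _ _)
    have hpM1 : |p| ≤ M1 := le_trans (by linarith [abs_nonneg q]) (le_max_right _ _)
    have hqM1 : |q| + 1 ≤ M1 := le_trans (by linarith [abs_nonneg p]) (le_max_right _ _)
    have b1 : bruhatLe BGensInf w0 w1⁻¹ := by
      apply hmin0 _ (signed_inv hs1) ⟨N1, fixes_inv hf1⟩
      -- rB p q w1⁻¹ = rB q p w1 ≥ k
      have e1 : rB p q w1⁻¹ = rB q p w1 := by
        conv_rhs => rw [← inv_inv w1]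
        rw [rB_inv (signed_inv hs1)]
      have e2 : rB (1-q) (1-p) w1 = p + q - 1 + rB p q w1⁻¹ := rB_shift hf1' p q hpM1 hqM1
      omega
    have b2 : bruhatLe BGensInf w1 w0⁻¹ := by
      apply hmin1 _ (signed_inv hs0) ⟨N0, fixes_inv hf0⟩
      have e2 : rB (1-q) (1-p) w0⁻¹ = p + q - 1 + rB p q w0⁻¹⁻¹ :=
        rB_shift (fixes_inv hf0') p q hpM0 hqM0
      rw [inv_inv] at e2
      -- rB p q w0 ≥ k, need rB (1-q)(1-p) w0⁻¹ ≥ p+q+k-1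
      -- rB p q w0⁻¹⁻¹ = rB p q w0; need rB p q w0⁻¹⁻¹? we have e2 : rB (1-q)(1-p) w0⁻¹ = p+q-1 + rB p q w0
      omega
    have hw : wlen BGensInf w1⁻¹ ≤ wlen BGensInf w0 := by
      have := bruhat_wlen_le b2
      rw [wlen_inv w0] at this
      rw [wlen_inv w1]
      exact this
    have := bruhat_antisymm b1 hw
    rw [this, inv_inv]
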